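/- Let T > 0 and define χ(t) := ∫₀^{T−t} (log((t+r)/r))² dr for t ∈ (0,T). Then χ(0) = 0 and 0 ≤ χ(t) ≤ (π²/3) t for all t ∈ (0, T/2]. -/

import Mathlib

open MeasureTheory Set Real

/-- The borderline function `χ(t) = ∫₀^{T−t} (log((t+r)/r))² dr`. -/
noncomputable def chiLog (T t : ℝ) : ℝ :=
  ∫ r in Ioo (0 : ℝ) (T - t), (Real.log ((t + r) / r)) ^ 2

lemma aux_integrable {n : ℕ} (hn : 0 < n) :
    IntegrableOn (fun y : ℝ => y ^ 2 * Real.exp (-(n * y))) (Ioi 0) := by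
  have h := integrableOn_rpow_mul_exp_neg_mul_rpow (p := 1) (s := 2) (b := n)
    (by norm_num) zero_lt_one (by exact_mod_cast hn)
  refine h.congr_fun (fun y hy => ?_) measurableSet_Ioi
  beta_reduce
  rw [Real.rpow_one, Real.rpow_two, neg_mul]

lemma aux_int {n : ℕ} (hn : 0 < n) :
    ∫ y in Ioi (0:ℝ), y ^ 2 * Real.exp (-(n * y)) = 2 / (n : ℝ) ^ 3 := by
  have hn' : (0:ℝ) < n := by exact_mod_cast hn
  have h := Real.integral_rpow_mul_exp_neg_mul_Ioi (a := 3) (r := n) (by norm_num) hn'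
  have hg : Real.Gamma 3 = 2 := by
    rw [show (3:ℝ) = ((2:ℕ):ℝ) + 1 by norm_num, Real.Gamma_nat_eq_factorial]; norm_num
  rw [show ∫ y in Ioi (0:ℝ), y ^ 2 * Real.exp (-(n * y))
      = ∫ y in Ioi (0:ℝ), y ^ ((3:ℝ) - 1) * Real.exp (-(n * y)) from
    setIntegral_congr_fun measurableSet_Ioi (fun y _ => by
      rw [show (3:ℝ) - 1 = ((2:ℕ):ℝ) by norm_num, Real.rpow_natCast]), h, hg,
    show (3:ℝ) = ((3:ℕ):ℝ) by norm_num, Real.rpow_natCast]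
  field_simp

lemma aux_hasSum (t : ℝ) {y : ℝ} (hy : 0 < y) :
    HasSum (fun n : ℕ => t * ((n:ℝ) * (y ^ 2 * Real.exp (-(n * y)))))
      (t * (Real.exp y / (Real.exp y - 1) ^ 2 * y ^ 2)) := by
  have hx : ‖Real.exp (-y)‖ < 1 := by
    rw [Real.norm_eq_abs, abs_of_pos (Real.exp_pos _)]
    exact Real.exp_lt_one_iff.mpr (by linarith)
  have h := (hasSum_coe_mul_geometric_of_norm_lt_one hx).mul_left (t * y ^ 2)
  have hE : (1:ℝ) < Real.exp y := by
    simpa using Real.exp_lt_exp.mpr hy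
  convert h using 1
  · rfl
  · funext n
    rw [← Real.exp_nat_mul]
    ring_nf
  · rw [Real.exp_neg]
    have h1 : Real.exp y - 1 ≠ 0 := by linarith
    have h2 : Real.exp y ≠ 0 := (Real.exp_pos y).ne'
    field_simp

lemma term_lintegral {t : ℝ} (ht : 0 ≤ t) (n : ℕ) :
    ∫⁻ y in Ioi (0:ℝ), ENNReal.ofReal (t * ((n:ℝ) * (y ^ 2 * Real.exp (-(n * y)))))
      = ENNReal.ofReal (t * (2 / (n:ℝ) ^ 2)) := by
  rcases Nat.eq_zero_or_pos n with rfl | hn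
  · simp
  · rw [← ofReal_integral_eq_lintegral_ofReal
      (((aux_integrable hn).const_mul (n:ℝ)).const_mul t)
      (ae_of_all _ fun y => by positivity)]
    rw [integral_const_mul, integral_const_mul, aux_int hn]
    congr 1
    have hn' : (n:ℝ) ≠ 0 := Nat.cast_ne_zero.mpr hn.ne'
    field_simp

lemma sum_ofReal {t : ℝ} (ht : 0 ≤ t) :
    ∑' n : ℕ, ENNReal.ofReal (t * (2 / (n:ℝ) ^ 2)) = ENNReal.ofReal ((π ^ 2 / 3) * t) := by
  have h : HasSum (fun n : ℕ => t * (2 / (n:ℝ) ^ 2)) ((π ^ 2 / 3) * t) := by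
    have := hasSum_zeta_two.mul_left (t * 2)
    convert this using 1
    · rfl
    · funext n; ring
    · ring
  rw [← ENNReal.ofReal_tsum_of_nonneg (fun n => by positivity) h.summable, h.tsum_eq]

lemma lintegral_image_eq' {s : Set ℝ} {f f' : ℝ → ℝ} (hs : MeasurableSet s)
    (hf' : ∀ x ∈ s, HasDerivWithinAt f (f' x) s x) (hf : InjOn f s) (g : ℝ → ENNReal) :
    ∫⁻ x in f '' s, g x = ∫⁻ x in s, ENNReal.ofReal |f' x| * g (f x) := by
  simpa only [ContinuousLinearMap.det_toSpanSingleton] using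
    lintegral_image_eq_lintegral_abs_det_fderiv_mul volume hs
      (fun x hx => (hf' x hx).hasFDerivWithinAt) hf g

lemma image_eq {t : ℝ} (ht : 0 < t) :
    (fun y => t / (Real.exp y - 1)) '' Ioi (0:ℝ) = Ioi 0 := by
  ext r
  simp only [mem_image, mem_Ioi]
  constructor
  · rintro ⟨y, hy, rfl⟩
    have hE : (1:ℝ) < Real.exp y := by simpa using Real.exp_lt_exp.mpr hy
    exact div_pos ht (by linarith)
  · intro hr
    refine ⟨Real.log (1 + t / r), ?_, ?_⟩
    · apply Real.log_pos; nlinarith [div_pos ht hr]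
    · rw [Real.exp_log (by positivity)]
      field_simp
      rw [add_sub_cancel_left]; exact div_self ht.ne'

lemma subst_lemma {t : ℝ} (ht : 0 < t) :
    ∫⁻ r in Ioi (0:ℝ), ENNReal.ofReal ((Real.log ((t + r) / r)) ^ 2)
      = ∫⁻ y in Ioi (0:ℝ),
          ENNReal.ofReal (t * (Real.exp y / (Real.exp y - 1) ^ 2 * y ^ 2)) := by
  have hd : ∀ y ∈ Ioi (0:ℝ), HasDerivWithinAt (fun y => t / (Real.exp y - 1))
      (-(t * (Real.exp y / (Real.exp y - 1) ^ 2))) (Ioi 0) y := by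
    intro y hy
    have hE : (1:ℝ) < Real.exp y := by simpa using Real.exp_lt_exp.mpr hy
    have h1 : HasDerivAt (fun y : ℝ => Real.exp y - 1) (Real.exp y) y :=
      (Real.hasDerivAt_exp y).sub_const 1
    have h2 := ((h1.inv (by linarith)).const_mul t).hasDerivWithinAt (s := Ioi (0:ℝ))
    refine h2.congr_deriv ?_
    ring
  have hinj : InjOn (fun y => t / (Real.exp y - 1)) (Ioi 0) := by
    intro a ha b hb h
    simp only [mem_Ioi] at ha hb
    have hEa : (1:ℝ) < Real.exp a := by simpa using Real.exp_lt_exp.mpr ha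
    have hEb : (1:ℝ) < Real.exp b := by simpa using Real.exp_lt_exp.mpr hb
    simp only at h
    have h' := (div_eq_div_iff (by linarith : Real.exp a - 1 ≠ 0)
      (by linarith : Real.exp b - 1 ≠ 0)).mp h
    have : Real.exp a - 1 = Real.exp b - 1 := mul_left_cancel₀ ht.ne' (by linarith)
    exact Real.exp_injective (by linarith)
  conv_lhs => rw [← image_eq ht]
  rw [lintegral_image_eq' measurableSet_Ioi hd hinj]
  refine setLIntegral_congr_fun measurableSet_Ioi (fun y hy => ?_)
  have hE : (1:ℝ) < Real.exp y := by simpa using Real.exp_lt_exp.mpr hy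
  have hE1 : (0:ℝ) < Real.exp y - 1 := by linarith
  have harg : (t + t / (Real.exp y - 1)) / (t / (Real.exp y - 1)) = Real.exp y := by
    field_simp
    ring
  rw [abs_neg, abs_of_pos (by positivity), harg, Real.log_exp,
    ← ENNReal.ofReal_mul (by positivity)]
  congr 1
  ring

lemma L_eq {t : ℝ} (ht : 0 < t) :
    ∫⁻ r in Ioi (0:ℝ), ENNReal.ofReal ((Real.log ((t + r) / r)) ^ 2)
      = ENNReal.ofReal ((π ^ 2 / 3) * t) := by
  rw [subst_lemma ht]
  have meas : ∀ n : ℕ, AEMeasurable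
      (fun y : ℝ => ENNReal.ofReal (t * ((n:ℝ) * (y ^ 2 * Real.exp (-(n * y))))))
      (volume.restrict (Ioi 0)) := by
    intro n
    exact (ENNReal.measurable_ofReal.comp (by fun_prop)).aemeasurable
  have step : ∫⁻ y in Ioi (0:ℝ),
        ENNReal.ofReal (t * (Real.exp y / (Real.exp y - 1) ^ 2 * y ^ 2))
      = ∑' n : ℕ, ∫⁻ y in Ioi (0:ℝ),
          ENNReal.ofReal (t * ((n:ℝ) * (y ^ 2 * Real.exp (-(n * y))))) := by
    rw [← lintegral_tsum meas]
    refine setLIntegral_congr_fun measurableSet_Ioi (fun y hy => ?_)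
    rw [← (aux_hasSum t hy).tsum_eq,
      ENNReal.ofReal_tsum_of_nonneg (fun n => by positivity) (aux_hasSum t hy).summable]
  rw [step]
  simp_rw [term_lintegral ht.le]
  exact sum_ofReal ht.le

/-- Case `α = β`: `χ(0) = 0` and `0 ≤ χ(t) ≤ (π²/3) t` on `(0, T/2]`. -/
theorem chiLog_bound (T : ℝ) (hT : 0 < T) :
    chiLog T 0 = 0 ∧ ∀ t ∈ Ioc (0 : ℝ) (T / 2),
      0 ≤ chiLog T t ∧ chiLog T t ≤ (π ^ 2 / 3) * t := by
  constructor
  · rw [chiLog, show ∫ r in Ioo (0:ℝ) (T - 0), (Real.log ((0 + r) / r)) ^ 2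
        = ∫ r in Ioo (0:ℝ) (T - 0), (0:ℝ) from
      setIntegral_congr_fun measurableSet_Ioo (fun r hr => by
        rw [zero_add, div_self (ne_of_gt hr.1), Real.log_one]; norm_num)]
    simp
  · intro t htmem
    obtain ⟨ht, _⟩ := htmem
    refine ⟨setIntegral_nonneg measurableSet_Ioo (fun r _ => sq_nonneg _), ?_⟩
    have hmeas : Measurable fun r : ℝ => (Real.log ((t + r) / r)) ^ 2 :=
      (Real.measurable_log.comp ((measurable_const.add measurable_id).div measurable_id)).pow_const 2
    rw [chiLog, integral_eq_lintegral_of_nonneg_ae (ae_of_all _ fun r => sq_nonneg _)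
      hmeas.aestronglyMeasurable]
    have hmono : ∫⁻ r in Ioo (0:ℝ) (T - t), ENNReal.ofReal ((Real.log ((t + r) / r)) ^ 2)
        ≤ ENNReal.ofReal ((π ^ 2 / 3) * t) := by
      rw [← L_eq ht]
      exact lintegral_mono_set Ioo_subset_Ioi_self
    calc (∫⁻ r in Ioo (0:ℝ) (T - t),
          ENNReal.ofReal ((Real.log ((t + r) / r)) ^ 2)).toReal
        ≤ (ENNReal.ofReal ((π ^ 2 / 3) * t)).toReal :=
          ENNReal.toReal_mono ENNReal.ofReal_ne_top hmono
      _ = (π ^ 2 / 3) * t := ENNReal.toReal_ofReal (by positivity)
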